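/- Let B be a real m×n matrix with QR-factorization B = QR, where Q is an m×n matrix with orthonormal columns (QᵀQ = I_n) and R is an upper triangular n×n matrix. Let c ∈ ℝ^m and γ > 0. Then σ_max([B, cγ]) ≤ max{σ_max(B), γ} · σ_max([Q, c]). -/

import Mathlib

/-- Euclidean norm of a vector in `ℝ^m`. -/
noncomputable def euclNorm {m : ℕ} (v : Fin m → ℝ) : ℝ :=
  Real.sqrt (∑ i, v i ^ 2)

/-- `σ_max(A) = sup {‖Ax‖₂ : ‖x‖₂ = 1}`. -/
noncomputable def sigmaMax {m n : ℕ} (A : Matrix (Fin m) (Fin n) ℝ) : ℝ :=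
  sSup {r : ℝ | ∃ x : Fin n → ℝ, euclNorm x = 1 ∧ r = euclNorm (A.mulVec x)}

/-- `σ_min(A) = inf {‖Ax‖₂ : ‖x‖₂ = 1}`. -/
noncomputable def sigmaMin {m n : ℕ} (A : Matrix (Fin m) (Fin n) ℝ) : ℝ :=
  sInf {r : ℝ | ∃ x : Fin n → ℝ, euclNorm x = 1 ∧ r = euclNorm (A.mulVec x)}

/-- Condition number `κ(A) = σ_max(A) / σ_min(A)`. -/
noncomputable def condNum {m n : ℕ} (A : Matrix (Fin m) (Fin n) ℝ) : ℝ :=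
  sigmaMax A / sigmaMin A

/-- `[B, b]`: the matrix `B` augmented with `b` as an additional last column. -/
def augment {m n : ℕ} (B : Matrix (Fin m) (Fin n) ℝ) (b : Fin m → ℝ) :
    Matrix (Fin m) (Fin (n + 1)) ℝ :=
  Matrix.of fun i => Fin.snoc (B i) (b i)


lemma euclNorm_nonneg {m : ℕ} (v : Fin m → ℝ) : 0 ≤ euclNorm v := Real.sqrt_nonneg _

lemma euclNorm_sq {m : ℕ} (v : Fin m → ℝ) : euclNorm v ^ 2 = ∑ i, v i ^ 2 := by
  rw [euclNorm, Real.sq_sqrt (Finset.sum_nonneg fun i _ => sq_nonneg _)]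

lemma euclNorm_smul {m : ℕ} (a : ℝ) (v : Fin m → ℝ) :
    euclNorm (a • v) = |a| * euclNorm v := by
  rw [euclNorm, euclNorm]
  have : ∑ i, (a • v) i ^ 2 = a ^ 2 * ∑ i, v i ^ 2 := by
    rw [Finset.mul_sum]; congr 1; ext i; simp [mul_pow]
  rw [this, Real.sqrt_mul (sq_nonneg a), Real.sqrt_sq_eq_abs]

lemma mulVec_frob {m n : ℕ} (A : Matrix (Fin m) (Fin n) ℝ) (x : Fin n → ℝ) :
    euclNorm (A.mulVec x) ≤ Real.sqrt (∑ i, ∑ j, A i j ^ 2) * euclNorm x := by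
  rw [euclNorm, euclNorm, ← Real.sqrt_mul (Finset.sum_nonneg fun i _ =>
    Finset.sum_nonneg fun j _ => sq_nonneg (A i j))]
  apply Real.sqrt_le_sqrt
  rw [Finset.sum_mul]
  apply Finset.sum_le_sum
  intro i _
  calc (A.mulVec x i) ^ 2 = (∑ j, A i j * x j) ^ 2 := by
        simp [Matrix.mulVec, dotProduct]
    _ ≤ (∑ j, A i j ^ 2) * ∑ j, x j ^ 2 := by
        have h := Finset.sum_mul_sq_le_sq_mul_sq Finset.univ (fun j => A i j) x
        simpa [sq] using h

lemma sigmaMax_bdd {m n : ℕ} (A : Matrix (Fin m) (Fin n) ℝ) :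
    BddAbove {r : ℝ | ∃ x : Fin n → ℝ, euclNorm x = 1 ∧ r = euclNorm (A.mulVec x)} := by
  refine ⟨Real.sqrt (∑ i, ∑ j, A i j ^ 2), ?_⟩
  rintro r ⟨x, hx, rfl⟩
  have := mulVec_frob A x
  rwa [hx, mul_one] at this

lemma sigmaMax_nonneg {m n : ℕ} (A : Matrix (Fin m) (Fin n) ℝ) : 0 ≤ sigmaMax A := by
  apply Real.sSup_nonneg
  rintro r ⟨x, hx, rfl⟩
  exact euclNorm_nonneg _

lemma euclNorm_eq_zero {m : ℕ} {v : Fin m → ℝ} (h : euclNorm v = 0) : v = 0 := by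
  have h2 : ∑ i, v i ^ 2 = 0 := by
    have := euclNorm_sq v
    rw [h] at this; simpa using this.symm
  funext i
  have := (Finset.sum_eq_zero_iff_of_nonneg (fun i _ => sq_nonneg (v i))).mp h2 i
    (Finset.mem_univ i)
  exact pow_eq_zero_iff (by norm_num) |>.mp this

lemma mulVec_le_sigmaMax {m n : ℕ} (A : Matrix (Fin m) (Fin n) ℝ) (x : Fin n → ℝ) :
    euclNorm (A.mulVec x) ≤ sigmaMax A * euclNorm x := by
  rcases eq_or_ne (euclNorm x) 0 with h | h
  · have hx0 : x = 0 := euclNorm_eq_zero h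
    subst hx0
    simp [h, Matrix.mulVec_zero, euclNorm]
  · have hpos : 0 < euclNorm x := (euclNorm_nonneg x).lt_of_ne (Ne.symm h)
    set u := (euclNorm x)⁻¹ • x with hu
    have hun : euclNorm u = 1 := by
      rw [hu, euclNorm_smul, abs_of_pos (inv_pos.mpr hpos), inv_mul_cancel₀ h]
    have hmem : euclNorm (A.mulVec u) ∈
        {r : ℝ | ∃ x : Fin n → ℝ, euclNorm x = 1 ∧ r = euclNorm (A.mulVec x)} :=
      ⟨u, hun, rfl⟩
    have hle := le_csSup (sigmaMax_bdd A) hmem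
    have : euclNorm (A.mulVec u) = (euclNorm x)⁻¹ * euclNorm (A.mulVec x) := by
      rw [hu, Matrix.mulVec_smul, euclNorm_smul, abs_of_pos (inv_pos.mpr hpos)]
    rw [this] at hle
    calc euclNorm (A.mulVec x) = ((euclNorm x)⁻¹ * euclNorm (A.mulVec x)) * euclNorm x := by
          field_simp
      _ ≤ sigmaMax A * euclNorm x := by
          apply mul_le_mul_of_nonneg_right hle hpos.le

lemma augment_mulVec {m n : ℕ} (A : Matrix (Fin m) (Fin n) ℝ) (b : Fin m → ℝ)
    (x : Fin (n + 1) → ℝ) :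
    (augment A b).mulVec x = A.mulVec (Fin.init x) + x (Fin.last n) • b := by
  funext i
  simp only [Matrix.mulVec, dotProduct, augment, Matrix.of_apply,
    Pi.add_apply, Pi.smul_apply, smul_eq_mul]
  rw [Fin.sum_univ_castSucc]
  simp [Fin.snoc_castSucc, Fin.snoc_last, Fin.init, mul_comm]

lemma euclNorm_snoc_sq {n : ℕ} (v : Fin n → ℝ) (t : ℝ) :
    euclNorm (Fin.snoc v t) ^ 2 = euclNorm v ^ 2 + t ^ 2 := by
  rw [euclNorm_sq, euclNorm_sq, Fin.sum_univ_castSucc]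
  simp

lemma mulVec_orth {m n : ℕ} (Q : Matrix (Fin m) (Fin n) ℝ)
    (hQ : Q.transpose * Q = 1) (w : Fin n → ℝ) :
    euclNorm (Q.mulVec w) = euclNorm w := by
  rw [euclNorm, euclNorm]
  congr 1
  have h1 : ∀ {k : ℕ} (v : Fin k → ℝ), ∑ i, v i ^ 2 = dotProduct v v := by
    intro k v; simp [dotProduct, sq]
  rw [h1, h1, Matrix.dotProduct_mulVec, ← Matrix.mulVec_transpose,
    Matrix.mulVec_mulVec, hQ, Matrix.one_mulVec]

theorem stmt_11 {m n : ℕ} (B Q : Matrix (Fin m) (Fin n) ℝ)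
    (R : Matrix (Fin n) (Fin n) ℝ) (hQR : B = Q * R)
    (hQ : Q.transpose * Q = 1)
    (hR : ∀ i j : Fin n, j < i → R i j = 0)
    (c : Fin m → ℝ) (γ : ℝ) (hγ : 0 < γ) :
    sigmaMax (augment B (γ • c)) ≤
      max (sigmaMax B) γ * sigmaMax (augment Q c) := by
  set M := max (sigmaMax B) γ with hM
  have hM0 : 0 ≤ M := le_max_of_le_right hγ.le
  have hσ0 : 0 ≤ sigmaMax (augment Q c) := sigmaMax_nonneg _
  apply Real.sSup_le _ (mul_nonneg hM0 hσ0)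
  rintro r ⟨x, hx, rfl⟩
  set x' := Fin.init x with hx'
  set t := x (Fin.last n) with ht
  set z : Fin (n + 1) → ℝ := Fin.snoc (R.mulVec x') (t * γ) with hz
  have hv : (augment B (γ • c)).mulVec x = (augment Q c).mulVec z := by
    rw [augment_mulVec, augment_mulVec, hz]
    simp only [Fin.init_snoc, Fin.snoc_last]
    rw [Matrix.mulVec_mulVec, ← hQR, smul_smul]
  rw [hv]
  -- norm of z
  have hRx : euclNorm (R.mulVec x') = euclNorm (B.mulVec x') := by
    rw [hQR, ← Matrix.mulVec_mulVec, mulVec_orth Q hQ]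
  have hzsq : euclNorm z ^ 2 ≤ M ^ 2 := by
    rw [hz, euclNorm_snoc_sq, hRx]
    have h1 : euclNorm (B.mulVec x') ^ 2 ≤ M ^ 2 * euclNorm x' ^ 2 := by
      have := mulVec_le_sigmaMax B x'
      have h2 : euclNorm (B.mulVec x') ≤ M * euclNorm x' :=
        this.trans (mul_le_mul_of_nonneg_right (le_max_left _ _) (euclNorm_nonneg _))
      calc euclNorm (B.mulVec x') ^ 2 ≤ (M * euclNorm x') ^ 2 :=
            pow_le_pow_left₀ (euclNorm_nonneg _) h2 2
        _ = M ^ 2 * euclNorm x' ^ 2 := by ring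
    have h3 : (t * γ) ^ 2 ≤ M ^ 2 * t ^ 2 := by
      have : γ ^ 2 ≤ M ^ 2 := pow_le_pow_left₀ hγ.le (le_max_right _ _) 2
      calc (t * γ) ^ 2 = γ ^ 2 * t ^ 2 := by ring
        _ ≤ M ^ 2 * t ^ 2 := mul_le_mul_of_nonneg_right this (sq_nonneg t)
    have hnorm1 : euclNorm x' ^ 2 + t ^ 2 = 1 := by
      have : euclNorm x ^ 2 = euclNorm x' ^ 2 + t ^ 2 := by
        rw [euclNorm_sq, euclNorm_sq, Fin.sum_univ_castSucc]
        simp [hx', Fin.init, ht]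
      rw [← this, hx, one_pow]
    calc euclNorm (B.mulVec x') ^ 2 + (t * γ) ^ 2
        ≤ M ^ 2 * euclNorm x' ^ 2 + M ^ 2 * t ^ 2 := add_le_add h1 h3
      _ = M ^ 2 * (euclNorm x' ^ 2 + t ^ 2) := by ring
      _ = M ^ 2 := by rw [hnorm1, mul_one]
  have hzle : euclNorm z ≤ M := by
    have h := Real.sqrt_le_sqrt hzsq
    rwa [Real.sqrt_sq (euclNorm_nonneg z), Real.sqrt_sq hM0] at h
  calc euclNorm ((augment Q c).mulVec z)
      ≤ sigmaMax (augment Q c) * euclNorm z := mulVec_le_sigmaMax _ _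
    _ ≤ sigmaMax (augment Q c) * M := mul_le_mul_of_nonneg_left hzle hσ0
    _ = M * sigmaMax (augment Q c) := mul_comm _ _
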